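/- Let A, B be n×n symmetric positive definite matrices with A ≼ B and ‖B‖ ≤ c₀‖A‖, and suppose after normalization ‖A‖ = 1 and ‖w‖_A = 1. If ‖(I − B⁻¹A)w‖²_A ≥ 1 − δ for δ ∈ (0,1), then the Euclidean norm and hence the max-norm of Aw are bounded: ‖Aw‖_∞ ≤ ‖Aw‖₂ ≤ √(c₀ δ). -/

import Mathlib

open Matrix

noncomputable def spec {n : ℕ} (M : Matrix (Fin n) (Fin n) ℝ) : ℝ :=
  ‖Matrix.toEuclideanCLM (𝕜 := ℝ) M‖

lemma spec_quad_bound {n : ℕ} (M : Matrix (Fin n) (Fin n) ℝ) (x : Fin n → ℝ) :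
    x ⬝ᵥ (M *ᵥ x) ≤ spec M * (x ⬝ᵥ x) := by
  set x' : EuclideanSpace ℝ (Fin n) := (WithLp.equiv 2 _).symm x with hx'
  have h2 : toEuclideanCLM (𝕜 := ℝ) M x' = (WithLp.equiv 2 _).symm (M *ᵥ x) := by
    exact rfl
  have h1 : x ⬝ᵥ (M *ᵥ x) = inner ℝ x' (toEuclideanCLM (𝕜 := ℝ) M x') := by
    rw [h2]; show _ = (M *ᵥ x) ⬝ᵥ star x; rw [star_trivial, dotProduct_comm]
  have hxx : x ⬝ᵥ x = ‖x'‖ * ‖x'‖ := by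
    rw [← real_inner_self_eq_norm_mul_norm]; show _ = x ⬝ᵥ star x; rw [star_trivial]
  calc x ⬝ᵥ (M *ᵥ x) = inner ℝ x' (toEuclideanCLM (𝕜 := ℝ) M x') := h1
    _ ≤ ‖x'‖ * ‖toEuclideanCLM (𝕜 := ℝ) M x'‖ := real_inner_le_norm _ _
    _ ≤ ‖x'‖ * (‖toEuclideanCLM (𝕜 := ℝ) M‖ * ‖x'‖) := by
        gcongr; exact (toEuclideanCLM (𝕜 := ℝ) M).le_opNorm x'
    _ = spec M * (x ⬝ᵥ x) := by rw [hxx, spec]; ring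

lemma psd_symm_dot {n : ℕ} {M : Matrix (Fin n) (Fin n) ℝ} (hM : M.IsHermitian)
    (x y : Fin n → ℝ) : x ⬝ᵥ (M *ᵥ y) = y ⬝ᵥ (M *ᵥ x) := by
  have hMT : Mᵀ = M := by
    have := hM.eq
    simpa using congrArg Matrix.transpose this |>.symm
  rw [Matrix.dotProduct_mulVec, dotProduct_comm, ← Matrix.mulVec_transpose, hMT]

lemma psd_cs {n : ℕ} {M : Matrix (Fin n) (Fin n) ℝ} (hM : M.PosSemidef)
    (x y : Fin n → ℝ) :
    (x ⬝ᵥ (M *ᵥ y)) ^ 2 ≤ (x ⬝ᵥ (M *ᵥ x)) * (y ⬝ᵥ (M *ᵥ y)) := by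
  have key : ∀ t : ℝ, 0 ≤ (y ⬝ᵥ (M *ᵥ y)) * (t * t) + (2 * (x ⬝ᵥ (M *ᵥ y))) * t
      + x ⬝ᵥ (M *ᵥ x) := by
    intro t
    have h := hM.dotProduct_mulVec_nonneg (x + t • y)
    have hsym := psd_symm_dot hM.1 y x
    simp only [star_trivial, Matrix.mulVec_add, Matrix.mulVec_smul, dotProduct_add,
      add_dotProduct, smul_dotProduct, dotProduct_smul,
      smul_eq_mul] at h
    rw [hsym] at h
    nlinarith [h]
  have := discrim_le_zero key
  rw [discrim] at this
  nlinarith [this]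

theorem near_null_componentwise {n : ℕ} (A B : Matrix (Fin n) (Fin n) ℝ)
    (hA : A.PosDef) (hB : B.PosDef) (hBA : (B - A).PosSemidef)
    (c₀ : ℝ) (hnorm : spec B ≤ c₀ * spec A)
    (hAnorm : spec A = 1)
    (w : Fin n → ℝ) (hwnorm : w ⬝ᵥ (A *ᵥ w) = 1)
    (δ : ℝ) (hδ : δ ∈ Set.Ioo (0 : ℝ) 1)
    (hstall : 1 - δ ≤ ((1 - B⁻¹ * A) *ᵥ w) ⬝ᵥ (A *ᵥ ((1 - B⁻¹ * A) *ᵥ w))) :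
    (∀ i, |(A *ᵥ w) i| ≤ Real.sqrt ((A *ᵥ w) ⬝ᵥ (A *ᵥ w))) ∧
    Real.sqrt ((A *ᵥ w) ⬝ᵥ (A *ᵥ w)) ≤ Real.sqrt (c₀ * δ) := by
  set u : Fin n → ℝ := A *ᵥ w with hu
  set y : Fin n → ℝ := B⁻¹ *ᵥ u with hy
  have hBdet : IsUnit B.det := isUnit_iff_ne_zero.2 (ne_of_gt hB.det_pos)
  have hBy : B *ᵥ y = u := by
    rw [hy, Matrix.mulVec_mulVec, Matrix.mul_nonsing_inv B hBdet, Matrix.one_mulVec]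
  -- rewrite hstall
  have hexp : (1 - B⁻¹ * A) *ᵥ w = w - y := by
    rw [Matrix.sub_mulVec, Matrix.one_mulVec, hy, hu, Matrix.mulVec_mulVec]
  rw [hexp] at hstall
  have hAsym := hA.1
  have hwAy : w ⬝ᵥ (A *ᵥ y) = y ⬝ᵥ u := by
    rw [psd_symm_dot hAsym w y, hu, dotProduct_comm]
  have hyAw : y ⬝ᵥ (A *ᵥ w) = y ⬝ᵥ u := by rw [hu]
  have hquad : (w - y) ⬝ᵥ (A *ᵥ (w - y))
      = 1 - 2 * (y ⬝ᵥ u) + y ⬝ᵥ (A *ᵥ y) := by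
    rw [Matrix.mulVec_sub, sub_dotProduct, dotProduct_sub,
      dotProduct_sub, hwnorm, hwAy, hyAw]
    ring
  rw [hquad] at hstall
  have hAleB : y ⬝ᵥ (A *ᵥ y) ≤ y ⬝ᵥ (B *ᵥ y) := by
    have := hBA.dotProduct_mulVec_nonneg y
    simp only [star_trivial, Matrix.sub_mulVec, dotProduct_sub] at this
    linarith
  have hyBy : y ⬝ᵥ (B *ᵥ y) = y ⬝ᵥ u := by rw [hBy]
  have hyu_le : y ⬝ᵥ u ≤ δ := by rw [hyBy] at hAleB; linarith
  have hyu_nonneg : 0 ≤ y ⬝ᵥ u := by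
    rw [← hyBy]; simpa using hB.posSemidef.dotProduct_mulVec_nonneg y
  -- Cauchy–Schwarz with B
  have hcs := psd_cs hB.posSemidef u y
  rw [hBy] at hcs
  have hspecB : u ⬝ᵥ (B *ᵥ u) ≤ c₀ * (u ⬝ᵥ u) := by
    calc u ⬝ᵥ (B *ᵥ u) ≤ spec B * (u ⬝ᵥ u) := spec_quad_bound B u
      _ ≤ c₀ * (u ⬝ᵥ u) := by
          have huu : 0 ≤ u ⬝ᵥ u := Finset.sum_nonneg fun i _ => mul_self_nonneg (u i)
          have : spec B ≤ c₀ := by rw [hAnorm] at hnorm; linarith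
          nlinarith
  have huu_nonneg : 0 ≤ u ⬝ᵥ u := Finset.sum_nonneg fun i _ => mul_self_nonneg (u i)
  have hmain : u ⬝ᵥ u ≤ c₀ * δ := by
    have hc₀ : 0 ≤ c₀ := by
      have : (0:ℝ) ≤ spec B := norm_nonneg _
      rw [hAnorm] at hnorm; linarith
    have h3 : (u ⬝ᵥ u) * (u ⬝ᵥ u) ≤ (c₀ * δ) * (u ⬝ᵥ u) := by
      have h1 := mul_le_mul_of_nonneg_right hspecB hyu_nonneg
      have h2 := mul_le_mul_of_nonneg_left hyu_le (mul_nonneg hc₀ huu_nonneg)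
      nlinarith [hcs]
    rcases eq_or_lt_of_le huu_nonneg with h0 | hpos
    · rw [← h0]; exact mul_nonneg hc₀ (le_of_lt hδ.1)
    · exact le_of_mul_le_mul_right h3 hpos
  constructor
  · intro i
    apply Real.abs_le_sqrt
    have h2 : u i * u i ≤ ∑ j, u j * u j :=
      Finset.single_le_sum (f := fun j => u j * u j)
        (fun j _ => mul_self_nonneg (u j)) (Finset.mem_univ i)
    rw [sq]
    simpa [dotProduct] using h2
  · exact Real.sqrt_le_sqrt hmain
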